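/- For k ∈ ℕ (k ≥ 0), let φ_k(x) = (k! 2^k √π)^{−1/2} e^{−x²/2} H_k(x) be the k-th Hermite function. Let a, b, c ∈ ℝ with a < 0 and suppose that √(1−a) and b are algebraically independent over ℚ. Then the elements of the sequence (∫_ℝ e^{a x² + b x + c} φ_k(x)² dx)_{k≥0} are ℚ-linearly independent. -/

import Mathlib

/-- The `k`-th (physicists') Hermite polynomial `H_k(x) = (-1)^k e^{x²} (d/dx)^k e^{-x²}`. -/
noncomputable def hermitePoly (k : ℕ) (x : ℝ) : ℝ :=
  (-1) ^ k * Real.exp (x ^ 2) * iteratedDeriv k (fun y => Real.exp (-y ^ 2)) x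

/-- The `k`-th Hermite function `φ_k(x) = (k! 2^k √π)^{-1/2} e^{-x²/2} H_k(x)`. -/
noncomputable def hermiteFun (k : ℕ) (x : ℝ) : ℝ :=
  (Real.sqrt (k.factorial * 2 ^ k * Real.sqrt Real.pi))⁻¹ *
    Real.exp (-x ^ 2 / 2) * hermitePoly k x

/-- A sequence of real numbers is `ℚ`-linearly independent if every nontrivial
finite rational linear combination of its terms is nonzero. -/
def QLinIndep (a : ℕ → ℝ) : Prop :=
  ∀ N : ℕ, ∀ q : Fin N → ℚ, q ≠ 0 → ∑ k, (q k : ℝ) * a k ≠ 0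


open Polynomial Real

/-- Integer-coefficient (well, rational) physicists' Hermite polynomials. -/
noncomputable def Hq : ℕ → Polynomial ℚ
  | 0 => 1
  | k + 1 => C 2 * X * Hq k - derivative (Hq k)

noncomputable def Hr (k : ℕ) : Polynomial ℝ := (Hq k).map (algebraMap ℚ ℝ)

lemma Hr_zero : Hr 0 = 1 := by simp [Hr, Hq]

lemma Hr_succ (k : ℕ) :
    Hr (k + 1) = C 2 * X * Hr k - derivative (Hr k) := by
  simp [Hr, Hq, Polynomial.map_sub, Polynomial.map_mul, derivative_map]

lemma iteratedDeriv_gauss (k : ℕ) :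
    iteratedDeriv k (fun y : ℝ => Real.exp (-y ^ 2)) =
      fun x => ((-1) ^ k * (Hr k).eval x) * Real.exp (-x ^ 2) := by
  induction k with
  | zero => funext x; simp [Hr_zero]
  | succ k ih =>
      funext x
      rw [iteratedDeriv_succ, ih]
      have hx : HasDerivAt (fun x : ℝ => -x ^ 2) (-(2 * x)) x := by
        simpa using (hasDerivAt_pow 2 x).fun_neg
      have h1 : HasDerivAt (fun x : ℝ => (-1 : ℝ) ^ k * (Hr k).eval x)
          ((-1) ^ k * ((Hr k).derivative.eval x)) x :=
        ((Hr k).hasDerivAt x).const_mul _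
      have h : HasDerivAt (fun x : ℝ => ((-1) ^ k * (Hr k).eval x) * Real.exp (-x ^ 2))
          ((-1) ^ k * ((Hr k).derivative.eval x) * Real.exp (-x ^ 2) +
            ((-1) ^ k * (Hr k).eval x) * (Real.exp (-x ^ 2) * (-(2 * x)))) x :=
        h1.mul hx.exp
      rw [h.deriv, Hr_succ]
      simp only [eval_sub, eval_mul, eval_C, eval_X]
      ring

lemma hermitePoly_eq (k : ℕ) (x : ℝ) :
    ((-1 : ℝ) ^ k * Real.exp (x ^ 2) * iteratedDeriv k (fun y => Real.exp (-y ^ 2)) x)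
      = (Hr k).eval x := by
  rw [iteratedDeriv_gauss]
  have h1 : Real.exp (x ^ 2) * Real.exp (-x ^ 2) = 1 := by
    rw [← Real.exp_add]; simp
  have h2 : ((-1 : ℝ) ^ k) * ((-1 : ℝ) ^ k) = 1 := by
    rw [← pow_add]; simp [pow_mul, ← two_mul]
  calc (-1 : ℝ) ^ k * Real.exp (x ^ 2) * ((-1) ^ k * (Hr k).eval x * Real.exp (-x ^ 2))
      = (((-1 : ℝ) ^ k) * ((-1 : ℝ) ^ k)) * (Real.exp (x ^ 2) * Real.exp (-x ^ 2)) *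
        (Hr k).eval x := by ring
    _ = (Hr k).eval x := by rw [h1, h2]; ring

lemma Hq_deg : ∀ k : ℕ, (Hq k).natDegree = k ∧ (Hq k).coeff k = 2 ^ k := by
  intro k
  induction k with
  | zero => simp [Hq]
  | succ k ih =>
      obtain ⟨hd, hc⟩ := ih
      have hne : Hq k ≠ 0 := fun h => by
        rw [h] at hc; simp at hc
        exact absurd hc.symm (by positivity)
      have hCX : (C (2:ℚ) * X) ≠ 0 := fun h => by
        simpa using congrArg (fun p => Polynomial.coeff p 1) h
      have hA : (C (2:ℚ) * X * Hq k).natDegree = k + 1 := by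
        rw [natDegree_mul hCX hne, natDegree_C_mul_X _ (by norm_num), hd, add_comm]
      have hDlt : (derivative (Hq k)).natDegree < k + 1 :=
        lt_of_le_of_lt (natDegree_derivative_le _) (by omega)
      rw [show Hq (k + 1) = C 2 * X * Hq k - derivative (Hq k) from rfl]
      constructor
      · rw [natDegree_sub_eq_left_of_natDegree_lt (by rw [hA]; exact hDlt), hA]
      · rw [coeff_sub, coeff_eq_zero_of_natDegree_lt hDlt, sub_zero, mul_assoc,
          coeff_C_mul, coeff_X_mul, hc]
        ring

open MeasureTheory Filter Real

lemma integrable_expQuad {p : ℝ} (hp : 0 < p) (c : ℝ) :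
    Integrable (fun x : ℝ => Real.exp (-p * x ^ 2 + c * x)) := by
  have h := ((integrable_exp_neg_mul_sq hp).comp_sub_right (c / (2 * p))).const_mul
      (Real.exp (c ^ 2 / (4 * p)))
  refine h.congr (Eventually.of_forall fun x => ?_)
  show Real.exp _ * Real.exp _ = _
  rw [← Real.exp_add]
  congr 1
  field_simp
  ring

lemma moment_bound {p : ℝ} (b : ℝ) (n : ℕ) (x : ℝ) :
    ‖x ^ n * Real.exp (-p * x ^ 2 + b * x)‖ ≤
      (n.factorial : ℝ) * (Real.exp (-p * x ^ 2 + (b + 1) * x) +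
        Real.exp (-p * x ^ 2 + (b - 1) * x)) := by
  have h1 : |x| ^ n ≤ (n.factorial : ℝ) * Real.exp |x| := by
    have := Real.pow_div_factorial_le_exp _ (abs_nonneg x) n
    rw [div_le_iff₀ (by positivity)] at this
    linarith [this]
  have h2 : Real.exp |x| ≤ Real.exp x + Real.exp (-x) := by
    rcases abs_cases x with ⟨h, _⟩ | ⟨h, _⟩ <;> rw [h] <;>
      [linarith [Real.exp_pos (-x)]; linarith [Real.exp_pos x]]
  have he : (0:ℝ) < Real.exp (-p * x ^ 2 + b * x) := Real.exp_pos _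
  calc ‖x ^ n * Real.exp (-p * x ^ 2 + b * x)‖
      = |x| ^ n * Real.exp (-p * x ^ 2 + b * x) := by
        rw [norm_mul, norm_pow]; simp [Real.abs_exp]
    _ ≤ ((n.factorial : ℝ) * (Real.exp x + Real.exp (-x))) *
          Real.exp (-p * x ^ 2 + b * x) := by
        refine mul_le_mul_of_nonneg_right ?_ he.le
        calc |x| ^ n ≤ (n.factorial : ℝ) * Real.exp |x| := h1
          _ ≤ (n.factorial : ℝ) * (Real.exp x + Real.exp (-x)) := by
              refine mul_le_mul_of_nonneg_left h2 (by positivity)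
    _ = (n.factorial : ℝ) * (Real.exp (-p * x ^ 2 + (b + 1) * x) +
          Real.exp (-p * x ^ 2 + (b - 1) * x)) := by
        have ea : Real.exp (-p * x ^ 2 + b * x) * Real.exp x
            = Real.exp (-p * x ^ 2 + (b + 1) * x) := by rw [← Real.exp_add]; ring_nf
        have eb : Real.exp (-p * x ^ 2 + b * x) * Real.exp (-x)
            = Real.exp (-p * x ^ 2 + (b - 1) * x) := by rw [← Real.exp_add]; ring_nf
        calc ((n.factorial : ℝ) * (Real.exp x + Real.exp (-x))) *
              Real.exp (-p * x ^ 2 + b * x)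
            = (n.factorial : ℝ) * (Real.exp (-p * x ^ 2 + b * x) * Real.exp x +
                Real.exp (-p * x ^ 2 + b * x) * Real.exp (-x)) := by ring
          _ = _ := by rw [ea, eb]

lemma integrable_moment {p : ℝ} (hp : 0 < p) (b : ℝ) (n : ℕ) :
    Integrable (fun x : ℝ => x ^ n * Real.exp (-p * x ^ 2 + b * x)) := by
  refine Integrable.mono' (((integrable_expQuad hp (b+1)).add
    (integrable_expQuad hp (b-1))).const_mul (n.factorial : ℝ)) ?_ ?_
  · exact (Continuous.mul (continuous_pow n)
      (Real.continuous_exp.comp (by continuity))).aestronglyMeasurable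
  · exact Eventually.of_forall (moment_bound b n)

lemma expQuad_tendsto_top {p : ℝ} (hp : 0 < p) (c : ℝ) :
    Tendsto (fun x : ℝ => Real.exp (-p * x ^ 2 + c * x)) atTop (nhds 0) := by
  have h2 : Tendsto (fun x : ℝ => c - p * x) atTop atBot := by
    have h0 := tendsto_neg_atTop_atBot.comp (tendsto_id.const_mul_atTop (l := atTop) hp)
    have h3 := tendsto_atBot_add_const_left atTop c h0
    exact h3.congr fun x => by simp [Function.comp]; ring
  have h : Tendsto (fun x : ℝ => -p * x ^ 2 + c * x) atTop atBot :=
    (tendsto_id.atTop_mul_atBot₀ h2).congr fun x => by simp; ring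
  exact Real.tendsto_exp_atBot.comp h

lemma expQuad_tendsto_bot {p : ℝ} (hp : 0 < p) (c : ℝ) :
    Tendsto (fun x : ℝ => Real.exp (-p * x ^ 2 + c * x)) atBot (nhds 0) := by
  have h2 : Tendsto (fun x : ℝ => c - p * x) atBot atTop := by
    have h0 := tendsto_neg_atBot_atTop.comp ((tendsto_id (α := ℝ)).const_mul_atBot (l := atBot) hp)
    have h3 := tendsto_atTop_add_const_left atBot c h0
    exact h3.congr fun x => by simp [Function.comp]; ring
  have h : Tendsto (fun x : ℝ => -p * x ^ 2 + c * x) atBot atBot :=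
    (tendsto_id.atBot_mul_atTop₀ h2).congr fun x => by simp; ring
  exact Real.tendsto_exp_atBot.comp h

lemma moment_tendsto_top {p : ℝ} (hp : 0 < p) (b : ℝ) (n : ℕ) :
    Tendsto (fun x : ℝ => x ^ n * Real.exp (-p * x ^ 2 + b * x)) atTop (nhds 0) := by
  refine squeeze_zero_norm (moment_bound b n) ?_
  have := ((expQuad_tendsto_top hp (b+1)).add (expQuad_tendsto_top hp (b-1))).const_mul
    (n.factorial : ℝ)
  simpa using this

lemma moment_tendsto_bot {p : ℝ} (hp : 0 < p) (b : ℝ) (n : ℕ) :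
    Tendsto (fun x : ℝ => x ^ n * Real.exp (-p * x ^ 2 + b * x)) atBot (nhds 0) := by
  refine squeeze_zero_norm (moment_bound b n) ?_
  have := ((expQuad_tendsto_bot hp (b+1)).add (expQuad_tendsto_bot hp (b-1))).const_mul
    (n.factorial : ℝ)
  simpa using this

lemma integral_deriv_zero {f f' : ℝ → ℝ} (hd : ∀ x, HasDerivAt f (f' x) x)
    (hi : Integrable f') (ht : Tendsto f atTop (nhds 0)) (hb : Tendsto f atBot (nhds 0)) :
    ∫ x, f' x = 0 := by
  have h1 := integral_Iic_of_hasDerivAt_of_tendsto' (a := 0) (fun x _ => hd x)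
    hi.integrableOn hb
  have h2 := integral_Ioi_of_hasDerivAt_of_tendsto' (a := 0) (fun x _ => hd x)
    hi.integrableOn ht
  rw [← intervalIntegral.integral_Iic_add_Ioi (b := (0:ℝ)) hi.integrableOn hi.integrableOn, h1, h2]
  ring

lemma moment_rec {p : ℝ} (hp : 0 < p) (b : ℝ) (n : ℕ) :
    2 * p * ∫ x : ℝ, x ^ (n + 1) * Real.exp (-p * x ^ 2 + b * x) =
      b * (∫ x : ℝ, x ^ n * Real.exp (-p * x ^ 2 + b * x)) +
      n * ∫ x : ℝ, x ^ (n - 1) * Real.exp (-p * x ^ 2 + b * x) := by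
  have hA : Integrable (fun x : ℝ => (n:ℝ) * (x ^ (n-1) * Real.exp (-p * x ^ 2 + b * x))) := by
    exact (integrable_moment hp b (n-1)).const_mul _
  have hB : Integrable (fun x : ℝ => b * (x ^ n * Real.exp (-p * x ^ 2 + b * x))) := by
    exact (integrable_moment hp b n).const_mul _
  have hC : Integrable (fun x : ℝ => 2 * p * (x ^ (n+1) * Real.exp (-p * x ^ 2 + b * x))) := by
    exact (integrable_moment hp b (n+1)).const_mul _
  have hBC : Integrable (fun x : ℝ => b * (x ^ n * Real.exp (-p * x ^ 2 + b * x)) -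
      2 * p * (x ^ (n+1) * Real.exp (-p * x ^ 2 + b * x))) := by
    exact hB.sub hC
  have hd : ∀ x : ℝ, HasDerivAt (fun x : ℝ => x ^ n * Real.exp (-p * x ^ 2 + b * x))
      ((n:ℝ) * (x ^ (n-1) * Real.exp (-p * x ^ 2 + b * x)) +
        (b * (x ^ n * Real.exp (-p * x ^ 2 + b * x)) -
          2 * p * (x ^ (n+1) * Real.exp (-p * x ^ 2 + b * x)))) x := by
    intro x
    have hg : HasDerivAt (fun x : ℝ => -p * x ^ 2 + b * x) (-p * (2 * x) + b) x := by
      have := (((hasDerivAt_pow 2 x).const_mul (-p)).fun_add ((hasDerivAt_id x).const_mul b))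
      simpa using this.congr_deriv (by ring)
    have h := (hasDerivAt_pow n x).mul hg.exp
    refine h.congr_deriv ?_
    have hxx : x ^ n * x = x ^ (n + 1) := by rw [pow_succ]
    push_cast
    rw [← hxx]
    ring
  have hi : Integrable (fun x : ℝ => (n:ℝ) * (x ^ (n-1) * Real.exp (-p * x ^ 2 + b * x)) +
      (b * (x ^ n * Real.exp (-p * x ^ 2 + b * x)) -
        2 * p * (x ^ (n+1) * Real.exp (-p * x ^ 2 + b * x)))) := hA.add hBC
  have hz := integral_deriv_zero hd hi (moment_tendsto_top hp b n) (moment_tendsto_bot hp b n)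
  rw [integral_add hA hBC, integral_sub hB hC, integral_const_mul, integral_const_mul,
    integral_const_mul] at hz
  linarith

lemma moment_zero_pos {p : ℝ} (hp : 0 < p) (b : ℝ) :
    0 < ∫ x : ℝ, Real.exp (-p * x ^ 2 + b * x) := by
  rw [integral_pos_iff_support_of_nonneg (fun x => (Real.exp_pos _).le)
    (integrable_expQuad hp b)]
  have : Function.support (fun x : ℝ => Real.exp (-p * x ^ 2 + b * x)) = Set.univ :=
    Set.eq_univ_iff_forall.2 fun x => (Real.exp_pos _).ne'
  rw [this]
  simp

open Polynomial

/-- `St n` represents `(2p)^n G_n / G_0` as a polynomial: outer variable `B ↦ b`,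
inner variable `V ↦ 2p`. -/
noncomputable def St : ℕ → Polynomial (Polynomial ℚ)
  | 0 => 1
  | 1 => X
  | (n + 2) => X * St (n + 1) + C ((((n : ℚ) + 1)) • Polynomial.X) * St n

lemma St_coeff : ∀ n : ℕ, (St n).coeff n = 1 ∧ ∀ j, n < j → (St n).coeff j = 0 := by
  have St_eq : ∀ n : ℕ, St (n + 2) = X * St (n + 1) + C ((((n : ℚ) + 1)) • Polynomial.X) * St n :=
    fun n => by rw [St]
  have key : ∀ n : ℕ, ((St n).coeff n = 1 ∧ ∀ j, n < j → (St n).coeff j = 0) ∧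
      ((St (n+1)).coeff (n+1) = 1 ∧ ∀ j, n + 1 < j → (St (n+1)).coeff j = 0) := by
    intro n
    induction n with
    | zero =>
        refine ⟨⟨by simp [St], fun j hj => by
          simp only [St, coeff_one]; simp only [show ¬ j = 0 by omega]; simp⟩,
          ⟨by simp [St], fun j hj => ?_⟩⟩
        rw [show St 1 = X from rfl, coeff_X]
        simp only [ite_eq_right_iff]
        omega
    | succ n ih =>
        obtain ⟨h1, h2⟩ := ih
        refine ⟨h2, ?_, ?_⟩
        · rw [St_eq n, coeff_add, coeff_X_mul, coeff_C_mul, h2.1, h1.2 _ (by omega)]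
          rw [mul_zero, add_zero]
        · intro j hj
          obtain ⟨j', rfl⟩ : ∃ j', j = j' + 1 := ⟨j - 1, by omega⟩
          rw [St_eq n, coeff_add, coeff_X_mul, coeff_C_mul, h2.2 _ (by omega), h1.2 _ (by omega)]
          rw [mul_zero, add_zero]
  exact fun n => (key n).1

section Indep

/-- Evaluate a nested polynomial: inner variable at `v`, outer at `b`. -/
noncomputable def nev (b v : ℝ) : Polynomial (Polynomial ℚ) →+* ℝ :=
  Polynomial.eval₂RingHom ((Polynomial.aeval v).toRingHom : Polynomial ℚ →+* ℝ) b

/-- The embedding of nested polynomials into `MvPolynomial (Fin 2) ℚ`: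
inner variable ↦ `X 0`, outer ↦ `X 1`. -/
noncomputable def chi : Polynomial (Polynomial ℚ) →+* MvPolynomial (Fin 2) ℚ :=
  Polynomial.eval₂RingHom
    ((Polynomial.aeval (MvPolynomial.X 0 : MvPolynomial (Fin 2) ℚ)).toRingHom)
    (MvPolynomial.X 1)

noncomputable def rho : MvPolynomial (Fin 2) ℚ →+* Polynomial (Polynomial ℚ) :=
  (MvPolynomial.aeval (R := ℚ)
    (![Polynomial.C Polynomial.X, Polynomial.X] : Fin 2 → Polynomial (Polynomial ℚ))).toRingHom

lemma rho_chi (t : Polynomial (Polynomial ℚ)) : rho (chi t) = t := by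
  have : rho.comp chi = RingHom.id _ := by
    apply Polynomial.ringHom_ext
    · intro q
      show rho (chi (C q)) = C q
      rw [show chi (C q) = Polynomial.aeval (MvPolynomial.X 0 : MvPolynomial (Fin 2) ℚ) q from
        Polynomial.eval₂_C _ _]
      have : rho.comp ((Polynomial.aeval
          (MvPolynomial.X 0 : MvPolynomial (Fin 2) ℚ)).toRingHom) = (Polynomial.C :
          Polynomial ℚ →+* Polynomial (Polynomial ℚ)) := by
        apply Polynomial.ringHom_ext
        · intro a
          simp [rho, eq_ratCast]
        · simp [rho]
      exact RingHom.congr_fun this q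
    · show rho (chi X) = X
      rw [show chi X = MvPolynomial.X 1 from Polynomial.eval₂_X _ _]
      simp [rho]
  exact RingHom.congr_fun this t

lemma aeval_chi (s b : ℝ) (t : Polynomial (Polynomial ℚ)) :
    MvPolynomial.aeval (R := ℚ) ![s, b] (chi t) = nev b s t := by
  have : ((MvPolynomial.aeval (R := ℚ) ![s, b]).toRingHom).comp chi = nev b s := by
    apply Polynomial.ringHom_ext
    · intro q
      show MvPolynomial.aeval (R := ℚ) ![s, b] (chi (C q)) = nev b s (C q)
      rw [show chi (C q) = Polynomial.aeval (MvPolynomial.X 0 : MvPolynomial (Fin 2) ℚ) q from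
        Polynomial.eval₂_C _ _]
      rw [show nev b s (C q) = Polynomial.aeval (R := ℚ) s q from Polynomial.eval₂_C _ _]
      have : ((MvPolynomial.aeval (R := ℚ) ![s, b]).toRingHom).comp
          ((Polynomial.aeval (MvPolynomial.X 0 : MvPolynomial (Fin 2) ℚ)).toRingHom)
          = (Polynomial.aeval (R := ℚ) s).toRingHom := by
        apply Polynomial.ringHom_ext
        · intro a
          simp [eq_ratCast]
        · simp
      exact RingHom.congr_fun this q
    · show MvPolynomial.aeval (R := ℚ) ![s, b] (chi X) = nev b s X
      rw [show chi X = MvPolynomial.X 1 from Polynomial.eval₂_X _ _]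
      rw [show nev b s X = b from Polynomial.eval₂_X _ _]
      simp
  exact RingHom.congr_fun this t

lemma nev_ne_zero (s b : ℝ)
    (hind : Function.Injective (MvPolynomial.aeval (R := ℚ) ![s, b]))
    (t : Polynomial (Polynomial ℚ)) (ht : t ≠ 0) : nev b s t ≠ 0 := by
  intro h
  have h1 : MvPolynomial.aeval (R := ℚ) ![s, b] (chi t) = 0 := by
    rw [aeval_chi]; exact h
  have h2 : chi t = 0 := by
    apply hind
    simpa using h1
  have := rho_chi t
  rw [h2] at this
  simp at this
  exact ht this.symm

end Indep

lemma hermitePoly_eval (k : ℕ) (x : ℝ) : hermitePoly k x = (Hr k).eval x :=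
  hermitePoly_eq k x

open MeasureTheory in
lemma integral_weighted (a b c : ℝ) (ha : a < 0) (k : ℕ) :
    (∫ x : ℝ, Real.exp (a * x ^ 2 + b * x + c) * hermiteFun k x ^ 2)
      = (Real.exp c * ((k.factorial : ℝ) * 2 ^ k * Real.sqrt Real.pi)⁻¹) *
        ∑ n ∈ Finset.range (2 * k + 1), ((Hq k ^ 2).coeff n : ℝ) *
          ∫ x : ℝ, x ^ n * Real.exp (-(1 - a) * x ^ 2 + b * x) := by
  have hp : (0:ℝ) < 1 - a := by linarith
  have hCk : (0:ℝ) ≤ (k.factorial : ℝ) * 2 ^ k * Real.sqrt Real.pi := by positivity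
  have hdeg : (Hr k ^ 2).natDegree < 2 * k + 1 := by
    rw [Polynomial.natDegree_pow, show Hr k = (Hq k).map (algebraMap ℚ ℝ) from rfl,
      Polynomial.natDegree_map_eq_of_injective (algebraMap ℚ ℝ).injective, (Hq_deg k).1]
    omega
  have hcoeff : ∀ n, (Hr k ^ 2).coeff n = ((Hq k ^ 2).coeff n : ℝ) := by
    intro n
    rw [show Hr k ^ 2 = (Hq k ^ 2).map (algebraMap ℚ ℝ) from by
      rw [Polynomial.map_pow]; rfl, Polynomial.coeff_map]
    rfl
  have hptw : ∀ x : ℝ, Real.exp (a * x ^ 2 + b * x + c) * hermiteFun k x ^ 2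
      = (Real.exp c * ((k.factorial : ℝ) * 2 ^ k * Real.sqrt Real.pi)⁻¹) *
        ∑ n ∈ Finset.range (2 * k + 1), ((Hq k ^ 2).coeff n : ℝ) *
          (x ^ n * Real.exp (-(1 - a) * x ^ 2 + b * x)) := by
    intro x
    have e1 : hermiteFun k x ^ 2 =
        ((k.factorial : ℝ) * 2 ^ k * Real.sqrt Real.pi)⁻¹ *
          (Real.exp (-x ^ 2 / 2) ^ 2 * (Hr k).eval x ^ 2) := by
      rw [hermiteFun, hermitePoly_eval, mul_pow, mul_pow, ← Real.sqrt_inv,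
        Real.sq_sqrt (by positivity)]
      ring
    have e2 : Real.exp (-x ^ 2 / 2) ^ 2 = Real.exp (-x ^ 2) := by
      rw [sq, ← Real.exp_add]; ring_nf
    have e3 : Real.exp (a * x ^ 2 + b * x + c) * Real.exp (-x ^ 2)
        = Real.exp c * Real.exp (-(1 - a) * x ^ 2 + b * x) := by
      rw [← Real.exp_add, ← Real.exp_add]; ring_nf
    have e4 : (Hr k).eval x ^ 2 = (Hr k ^ 2).eval x := by rw [Polynomial.eval_pow]
    have e5 : (Hr k ^ 2).eval x
        = ∑ n ∈ Finset.range (2 * k + 1), ((Hq k ^ 2).coeff n : ℝ) * x ^ n := by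
      rw [Polynomial.eval_eq_sum_range' hdeg]
      exact Finset.sum_congr rfl fun n _ => by rw [hcoeff]
    calc Real.exp (a * x ^ 2 + b * x + c) * hermiteFun k x ^ 2
        = ((k.factorial : ℝ) * 2 ^ k * Real.sqrt Real.pi)⁻¹ *
            ((Real.exp (a * x ^ 2 + b * x + c) * Real.exp (-x ^ 2)) *
              (Hr k ^ 2).eval x) := by rw [e1, e2, e4]; ring
      _ = ((k.factorial : ℝ) * 2 ^ k * Real.sqrt Real.pi)⁻¹ *
            ((Real.exp c * Real.exp (-(1 - a) * x ^ 2 + b * x)) *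
              ∑ n ∈ Finset.range (2 * k + 1), ((Hq k ^ 2).coeff n : ℝ) * x ^ n) := by
          rw [e3, e5]
      _ = _ := by
          simp only [Finset.mul_sum]
          exact Finset.sum_congr rfl fun n _ => by ring
  calc (∫ x : ℝ, Real.exp (a * x ^ 2 + b * x + c) * hermiteFun k x ^ 2)
      = ∫ x : ℝ, (Real.exp c * ((k.factorial : ℝ) * 2 ^ k * Real.sqrt Real.pi)⁻¹) *
          ∑ n ∈ Finset.range (2 * k + 1), ((Hq k ^ 2).coeff n : ℝ) *
            (x ^ n * Real.exp (-(1 - a) * x ^ 2 + b * x)) := by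
        exact integral_congr_ae (Filter.Eventually.of_forall hptw)
    _ = (Real.exp c * ((k.factorial : ℝ) * 2 ^ k * Real.sqrt Real.pi)⁻¹) *
          ∫ x : ℝ, ∑ n ∈ Finset.range (2 * k + 1), ((Hq k ^ 2).coeff n : ℝ) *
            (x ^ n * Real.exp (-(1 - a) * x ^ 2 + b * x)) := integral_const_mul _ _
    _ = _ := by
        rw [integral_finset_sum _ fun n _ => ((integrable_moment hp b n).const_mul _)]
        congr 1
        exact Finset.sum_congr rfl fun n _ => integral_const_mul _ _

lemma St_step (n : ℕ) :
    St (n + 2) = X * St (n + 1) + C ((((n : ℚ) + 1)) • Polynomial.X) * St n := by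
  rw [St]

lemma nev_one (b v : ℝ) : nev b v 1 = 1 := map_one _

lemma nev_X (b v : ℝ) : nev b v X = b := Polynomial.eval₂_X _ _

lemma nev_C (b v : ℝ) (w : Polynomial ℚ) :
    nev b v (C w) = Polynomial.aeval (R := ℚ) v w := Polynomial.eval₂_C _ _

open MeasureTheory in
lemma moment_repr {p : ℝ} (hp : 0 < p) (b : ℝ) : ∀ n : ℕ,
    (2 * p) ^ n * (∫ x : ℝ, x ^ n * Real.exp (-p * x ^ 2 + b * x))
      = (∫ x : ℝ, x ^ 0 * Real.exp (-p * x ^ 2 + b * x)) * nev b (2 * p) (St n) := by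
  have key : ∀ n : ℕ,
      ((2 * p) ^ n * (∫ x : ℝ, x ^ n * Real.exp (-p * x ^ 2 + b * x))
        = (∫ x : ℝ, x ^ 0 * Real.exp (-p * x ^ 2 + b * x)) * nev b (2 * p) (St n)) ∧
      ((2 * p) ^ (n+1) * (∫ x : ℝ, x ^ (n+1) * Real.exp (-p * x ^ 2 + b * x))
        = (∫ x : ℝ, x ^ 0 * Real.exp (-p * x ^ 2 + b * x)) * nev b (2 * p) (St (n+1))) := by
    intro n
    induction n with
    | zero =>
        constructor
        · rw [show St 0 = 1 from rfl, nev_one, pow_zero, one_mul, mul_one]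
        · have hrec := moment_rec hp b 0
          simp only [Nat.cast_zero, zero_mul, add_zero] at hrec
          rw [show St 1 = X from rfl, nev_X, show ((2:ℝ)*p)^(0+1) = 2*p by norm_num, hrec]
          ring
    | succ n ih =>
        obtain ⟨h1, h2⟩ := ih
        refine ⟨h2, ?_⟩
        have hrec := moment_rec hp b (n + 1)
        have hnev : nev b (2*p) (St (n+2)) = b * nev b (2*p) (St (n+1)) +
            ((n:ℝ)+1) * (2*p) * nev b (2*p) (St n) := by
          rw [St_step, map_add, map_mul, map_mul, nev_X, nev_C, _root_.map_smul, Polynomial.aeval_X,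
            Rat.smul_def]
          push_cast
          ring
        have hidx : n + 1 - 1 = n := rfl
        rw [hidx] at hrec
        calc (2*p)^(n+2) * (∫ x : ℝ, x ^ (n+2) * Real.exp (-p * x ^ 2 + b * x))
            = (2*p)^(n+1) * (2 * p * ∫ x : ℝ, x ^ (n+2) * Real.exp (-p * x ^ 2 + b * x)) := by
              ring
          _ = (2*p)^(n+1) * (b * (∫ x : ℝ, x ^ (n+1) * Real.exp (-p * x ^ 2 + b * x)) +
                ((n:ℝ)+1) * ∫ x : ℝ, x ^ n * Real.exp (-p * x ^ 2 + b * x)) := by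
              rw [show ((n:ℕ)+2) = (n+1)+1 from rfl, hrec]
              push_cast; ring_nf
          _ = b * ((2*p)^(n+1) * (∫ x : ℝ, x ^ (n+1) * Real.exp (-p * x ^ 2 + b * x))) +
                ((n:ℝ)+1) * (2*p) * ((2*p)^n * ∫ x : ℝ, x ^ n * Real.exp (-p * x ^ 2 + b * x)) := by
              ring
          _ = (∫ x : ℝ, x ^ 0 * Real.exp (-p * x ^ 2 + b * x)) * nev b (2 * p) (St (n+2)) := by
              rw [h1, h2, hnev]
              ring
  exact fun n => (key n).1

open MeasureTheory in
/-- If `a < 0` and `√(1-a)` and `b` are algebraically independent over `ℚ`, then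
the numbers `∫ e^{ax² + bx + c} φ_k(x)² dx`, `k ≥ 0`, are `ℚ`-linearly
independent. -/
theorem qLinIndep_gaussian_weighted_hermite_diagonal
    (a b c : ℝ) (ha : a < 0)
    (hab : AlgebraicIndependent ℚ ![Real.sqrt (1 - a), b]) :
    QLinIndep (fun k =>
      ∫ x : ℝ, Real.exp (a * x ^ 2 + b * x + c) * hermiteFun k x ^ 2) := by
  classical
  intro N q hq
  set s : ℝ := Real.sqrt (1 - a) with hs
  have h1a : (0:ℝ) ≤ 1 - a := by linarith
  have hp : (0:ℝ) < 1 - a := by linarith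
  have hs2 : s ^ 2 = 1 - a := Real.sq_sqrt h1a
  have hind : Function.Injective (MvPolynomial.aeval (R := ℚ) ![s, b]) := hab
  -- the rational polynomial combining the squared Hermite polynomials
  set R : Polynomial ℚ :=
    ∑ k : Fin N, (q k / ((k : ℕ).factorial * 2 ^ (k : ℕ) : ℚ)) • (Hq (k : ℕ) ^ 2) with hR
  have hdegk : ∀ k : ℕ, (Hq k ^ 2).natDegree = 2 * k := fun k => by
    rw [Polynomial.natDegree_pow, (Hq_deg k).1]
  have hCkne : ∀ k : ℕ, ((k.factorial : ℚ) * 2 ^ k) ≠ 0 := fun k => by positivity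
  -- R is nonzero
  obtain ⟨k₀, hk₀⟩ := Function.ne_iff.mp hq
  have hk₀' : q k₀ ≠ 0 := by simpa using hk₀
  have hTne : (Finset.univ.filter (fun k => q k ≠ 0) : Finset (Fin N)).Nonempty :=
    ⟨k₀, by simp [hk₀']⟩
  obtain ⟨K, hKT, hKmax⟩ :=
    Finset.exists_max_image (Finset.univ.filter (fun k => q k ≠ 0) : Finset (Fin N)) id hTne
  have hqK : q K ≠ 0 := (Finset.mem_filter.mp hKT).2
  have hRK : R.coeff (2 * (K : ℕ)) ≠ 0 := by
    rw [hR, Polynomial.finset_sum_coeff]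
    rw [Finset.sum_eq_single K]
    · rw [Polynomial.coeff_smul, smul_eq_mul]
      have h2K : (Hq (K : ℕ) ^ 2).coeff (2 * (K : ℕ)) = (2 ^ (K : ℕ) : ℚ) ^ 2 := by
        have := hdegk (K : ℕ)
        rw [← this, Polynomial.coeff_natDegree, Polynomial.leadingCoeff_pow]
        rw [Polynomial.leadingCoeff, (Hq_deg (K : ℕ)).1, (Hq_deg (K : ℕ)).2]
      rw [h2K]
      exact mul_ne_zero (div_ne_zero hqK (hCkne _)) (by positivity)
    · intro k _ hkK
      by_cases hk : q k = 0
      · rw [hk]; simp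
      · have hkT : k ∈ (Finset.univ.filter (fun k => q k ≠ 0) : Finset (Fin N)) :=
          Finset.mem_filter.mpr ⟨Finset.mem_univ _, hk⟩
        have hle : k ≤ K := hKmax k hkT
        have hlt : (k : ℕ) < (K : ℕ) := by
          rcases lt_or_eq_of_le hle with h | h
          · exact h
          · exact absurd h hkK
        refine Polynomial.coeff_eq_zero_of_natDegree_lt ?_
        refine lt_of_le_of_lt (Polynomial.natDegree_smul_le _ _) ?_
        rw [hdegk]; omega
    · intro h; exact absurd (Finset.mem_univ K) h
  have hRne : R ≠ 0 := fun h => hRK (by rw [h]; simp)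
  set D := R.natDegree with hD
  have hDle : D ≤ 2 * N := by
    rw [hD, hR]
    refine Polynomial.natDegree_sum_le_of_forall_le _ _ fun k _ => ?_
    refine le_trans (Polynomial.natDegree_smul_le _ _) ?_
    rw [hdegk]
    have := k.2
    omega
  -- the nested polynomial witnessing the linear combination
  set F : Polynomial (Polynomial ℚ) := ∑ n ∈ Finset.range (2 * N + 1),
      C (Polynomial.C (R.coeff n) * Polynomial.X ^ (2 * N - n)) * St n with hF
  have hFcoeff : F.coeff D = Polynomial.C (R.coeff D) * Polynomial.X ^ (2 * N - D) := by
    rw [hF, Polynomial.finset_sum_coeff]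
    rw [Finset.sum_eq_single D]
    · rw [Polynomial.coeff_C_mul, (St_coeff D).1, mul_one]
    · intro n _ hne
      rcases lt_or_gt_of_ne hne with h | h
      · rw [Polynomial.coeff_C_mul, (St_coeff n).2 D h, mul_zero]
      · have : R.coeff n = 0 := Polynomial.coeff_eq_zero_of_natDegree_lt h
        rw [Polynomial.coeff_C_mul, this]
        simp
    · intro h
      exact absurd (Finset.mem_range.mpr (by omega)) h
  have hFne : F ≠ 0 := by
    intro h
    rw [h, Polynomial.coeff_zero] at hFcoeff
    have : Polynomial.C (R.coeff D) * Polynomial.X ^ (2 * N - D) ≠ 0 := by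
      refine mul_ne_zero ?_ (pow_ne_zero _ Polynomial.X_ne_zero)
      rw [Ne, Polynomial.C_eq_zero]
      exact Polynomial.leadingCoeff_ne_zero.mpr hRne
    exact this hFcoeff.symm
  -- the substitution V ↦ 2 Y²
  set r : Polynomial ℚ := Polynomial.C 2 * Polynomial.X ^ 2 with hr
  have hrdeg : r.natDegree = 2 := Polynomial.natDegree_C_mul_X_pow 2 2 two_ne_zero
  set φ : Polynomial ℚ →+* Polynomial ℚ := (Polynomial.aeval (R := ℚ) r).toRingHom with hφ
  have hφc : ∀ t : Polynomial ℚ, φ t = t.comp r := fun t => rfl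
  have hφinj : Function.Injective φ := by
    intro u v huv
    by_contra hne
    have hw : u - v ≠ 0 := sub_ne_zero.mpr hne
    have h0 : φ (u - v) = 0 := by rw [map_sub, huv, sub_self]
    rw [hφc] at h0
    have := Polynomial.leadingCoeff_comp (p := u - v) (q := r) (by rw [hrdeg]; omega)
    rw [h0] at this
    simp only [Polynomial.leadingCoeff_zero] at this
    have hrl : r.leadingCoeff = 2 := by
      rw [hr, Polynomial.leadingCoeff, Polynomial.natDegree_C_mul_X_pow 2 2 two_ne_zero]
      simp
    rw [hrl] at this
    exact (Polynomial.leadingCoeff_ne_zero.mpr hw)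
      (by
        have h2 : ((2:ℚ) ^ (u - v).natDegree) ≠ 0 := by positivity
        field_simp at this
        exact (mul_eq_zero.mp this.symm).resolve_right h2)
  have hFm : F.map φ ≠ 0 := (Polynomial.map_ne_zero_iff hφinj).mpr hFne
  -- evaluation compatibility
  have hcomp : ((Polynomial.aeval (R := ℚ) s).toRingHom).comp φ
      = (Polynomial.aeval (R := ℚ) (2 * (1 - a))).toRingHom := by
    apply Polynomial.ringHom_ext
    · intro a'
      simp [hφ, eq_ratCast]
    · show Polynomial.aeval (R := ℚ) s (φ Polynomial.X) = _
      rw [show φ Polynomial.X = r from by simp [hφ], hr]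
      simp [hs2]
  have hnevF : nev b (2 * (1 - a)) F = nev b s (F.map φ) := by
    show Polynomial.eval₂ _ b F = Polynomial.eval₂ _ b (F.map φ)
    rw [Polynomial.eval₂_map, hcomp]
  have hmain : nev b (2 * (1 - a)) F ≠ 0 := by
    rw [hnevF]
    exact nev_ne_zero s b hind _ hFm
  -- analytic evaluation of the linear combination
  have hsum : (∑ k : Fin N, (q k : ℝ) *
        ∫ x : ℝ, Real.exp (a * x ^ 2 + b * x + c) * hermiteFun k x ^ 2)
      = Real.exp c * (Real.sqrt Real.pi)⁻¹ *
        ∑ n ∈ Finset.range (2 * N + 1), (R.coeff n : ℝ) *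
          ∫ x : ℝ, x ^ n * Real.exp (-(1 - a) * x ^ 2 + b * x) := by
    have step1 : ∀ k : Fin N, (q k : ℝ) *
          (∫ x : ℝ, Real.exp (a * x ^ 2 + b * x + c) * hermiteFun k x ^ 2)
        = ∑ n ∈ Finset.range (2 * N + 1),
            Real.exp c * (Real.sqrt Real.pi)⁻¹ *
              (((q k / ((k : ℕ).factorial * 2 ^ (k : ℕ) : ℚ)) * (Hq (k : ℕ) ^ 2).coeff n : ℚ) : ℝ) *
              ∫ x : ℝ, x ^ n * Real.exp (-(1 - a) * x ^ 2 + b * x) := by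
      intro k
      rw [integral_weighted a b c ha (k : ℕ)]
      have hext : ∑ n ∈ Finset.range (2 * (k : ℕ) + 1), ((Hq (k : ℕ) ^ 2).coeff n : ℝ) *
            ∫ x : ℝ, x ^ n * Real.exp (-(1 - a) * x ^ 2 + b * x)
          = ∑ n ∈ Finset.range (2 * N + 1), ((Hq (k : ℕ) ^ 2).coeff n : ℝ) *
            ∫ x : ℝ, x ^ n * Real.exp (-(1 - a) * x ^ 2 + b * x) := by
        refine Finset.sum_subset ?_ ?_
        · intro n hn
          rw [Finset.mem_range] at hn ⊢
          have := k.2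
          omega
        · intro n _ hn
          rw [Finset.mem_range] at hn
          have : (Hq (k : ℕ) ^ 2).coeff n = 0 := by
            refine Polynomial.coeff_eq_zero_of_natDegree_lt ?_
            rw [hdegk]; omega
          rw [this]
          simp
      rw [hext, Finset.mul_sum, Finset.mul_sum]
      refine Finset.sum_congr rfl fun n _ => ?_
      have hsplit : ((k : ℕ).factorial * 2 ^ (k : ℕ) * Real.sqrt Real.pi : ℝ)⁻¹
          = ((k : ℕ).factorial * 2 ^ (k : ℕ) : ℝ)⁻¹ * (Real.sqrt Real.pi)⁻¹ := by
        rw [mul_inv]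
      push_cast
      rw [hsplit]
      have h2 : ((k : ℕ).factorial : ℝ) * 2 ^ (k : ℕ) ≠ 0 := by positivity
      field_simp
    rw [Finset.sum_congr rfl fun k _ => step1 k, Finset.sum_comm]
    rw [Finset.mul_sum]
    refine Finset.sum_congr rfl fun n _ => ?_
    have hcoeffR0 : R.coeff n
        = ∑ k : Fin N, (q k / ((k : ℕ).factorial * 2 ^ (k : ℕ) : ℚ)) *
            (Hq (k : ℕ) ^ 2).coeff n := by
      rw [hR, Polynomial.finset_sum_coeff]
      exact Finset.sum_congr rfl fun k _ => by rw [Polynomial.coeff_smul, smul_eq_mul]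
    have hcoeffR : (R.coeff n : ℝ)
        = ∑ k : Fin N, (((q k / ((k : ℕ).factorial * 2 ^ (k : ℕ) : ℚ)) *
            (Hq (k : ℕ) ^ 2).coeff n : ℚ) : ℝ) := by
      rw [hcoeffR0, Rat.cast_sum]
    rw [hcoeffR, Finset.sum_mul, Finset.mul_sum]
    refine Finset.sum_congr rfl fun k _ => by ring
  -- relate the moment sum to `nev b (2(1-a)) F`
  have hval : (2 * (1 - a)) ^ (2 * N) *
        ∑ n ∈ Finset.range (2 * N + 1), (R.coeff n : ℝ) *
          ∫ x : ℝ, x ^ n * Real.exp (-(1 - a) * x ^ 2 + b * x)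
      = (∫ x : ℝ, x ^ 0 * Real.exp (-(1 - a) * x ^ 2 + b * x)) * nev b (2 * (1 - a)) F := by
    have hnevF2 : nev b (2 * (1 - a)) F
        = ∑ n ∈ Finset.range (2 * N + 1),
            (R.coeff n : ℝ) * (2 * (1 - a)) ^ (2 * N - n) * nev b (2 * (1 - a)) (St n) := by
      rw [hF, map_sum]
      refine Finset.sum_congr rfl fun n _ => ?_
      rw [map_mul, nev_C, map_mul, map_pow, Polynomial.aeval_C, Polynomial.aeval_X]
      simp [eq_ratCast]
    rw [hnevF2, Finset.mul_sum, Finset.mul_sum]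
    refine Finset.sum_congr rfl fun n hn => ?_
    rw [Finset.mem_range] at hn
    have hpow : ((2 : ℝ) * (1 - a)) ^ (2 * N) = (2 * (1 - a)) ^ (2 * N - n) * (2 * (1 - a)) ^ n := by
      rw [← pow_add, Nat.sub_add_cancel (by omega)]
    calc (2 * (1 - a)) ^ (2 * N) * ((R.coeff n : ℝ) *
            ∫ x : ℝ, x ^ n * Real.exp (-(1 - a) * x ^ 2 + b * x))
        = (R.coeff n : ℝ) * (2 * (1 - a)) ^ (2 * N - n) *
            ((2 * (1 - a)) ^ n * ∫ x : ℝ, x ^ n * Real.exp (-(1 - a) * x ^ 2 + b * x)) := by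
          rw [hpow]; ring
      _ = _ := by rw [moment_repr hp b n]; ring
  -- conclude
  intro h0
  rw [hsum] at h0
  have hπ : (0:ℝ) < Real.sqrt Real.pi := Real.sqrt_pos.mpr Real.pi_pos
  have hS : (∑ n ∈ Finset.range (2 * N + 1), (R.coeff n : ℝ) *
      ∫ x : ℝ, x ^ n * Real.exp (-(1 - a) * x ^ 2 + b * x)) = 0 := by
    have he : Real.exp c * (Real.sqrt Real.pi)⁻¹ ≠ 0 :=
      mul_ne_zero (Real.exp_ne_zero c) (inv_ne_zero hπ.ne')
    exact (mul_eq_zero.mp h0).resolve_left he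
  rw [hS, mul_zero] at hval
  have hG0 : 0 < ∫ x : ℝ, x ^ 0 * Real.exp (-(1 - a) * x ^ 2 + b * x) := by
    have : (fun x : ℝ => x ^ 0 * Real.exp (-(1 - a) * x ^ 2 + b * x))
        = fun x : ℝ => Real.exp (-(1 - a) * x ^ 2 + b * x) := by
      funext x; simp
    rw [this]
    exact moment_zero_pos hp b
  have := mul_ne_zero hG0.ne' hmain
  exact this hval.symm
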